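/- Set λ = (m+1)/2 and define W(r) = (Z(r) − λ)/r² for r ∈ (0,1], with Z as in the context. Then W(r) < 0 for all r ∈ (0,1], and the limit a = lim_{r→0⁺} W(r) exists and is a negative real number. -/

import Mathlib

open Polynomial Set Filter Topology

set_option maxHeartbeats 1600000 in
/-- Lemma 3.11 of the paper: W(r) = (Z(r) − (m+1)/2)/r² is
negative on (0,1] and has a negative limit as r → 0⁺. -/
theorem stmt_9 (m : ℕ) (hm : 2 ≤ m)
    (lam : Fin (m - 1) → ℝ) (hmono : Monotone lam) (hlt : ∀ i, lam i < 1)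
    (P Q Phat Qhat : Polynomial ℝ)
    (hP : P = ∏ i : Fin (m - 1), (X - C (2 * lam i / ((m : ℝ) + 1))))
    (hQder : ∀ y : ℝ, (derivative Q).eval y = ((m : ℝ) + 1) * y * P.eval y)
    (hQval : Q.eval (2 / ((m : ℝ) + 1)) = 0)
    (hPhat : ∀ x : ℝ, x ≠ 0 → Phat.eval x = x ^ (m - 1) * P.eval (1 / x))
    (hQhat : ∀ x : ℝ, x ≠ 0 → Qhat.eval x = x ^ (m + 1) * Q.eval (1 / x))
    (Z : ℝ → ℝ)
    (hZan : ∃ c d : ℝ, Ioc (0 : ℝ) 1 ⊆ Ioo c d ∧ AnalyticOnNhd ℝ Z (Ioo c d))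
    (hODE : ∀ r ∈ Ioc (0 : ℝ) 1,
      r * deriv Z r * Phat.eval (Z r) + Qhat.eval (Z r) = 0)
    (hZ1 : Z 1 = 0)
    (hZ' : ∀ r ∈ Ioc (0 : ℝ) 1, deriv Z r < 0)
    (hZlim : Tendsto Z (𝓝[>] (0 : ℝ)) (𝓝 (((m : ℝ) + 1) / 2))) :
    (∀ r ∈ Ioc (0 : ℝ) 1, (Z r - ((m : ℝ) + 1) / 2) / r ^ 2 < 0) ∧
    (∃ a : ℝ, a < 0 ∧
      Tendsto (fun r => (Z r - ((m : ℝ) + 1) / 2) / r ^ 2) (𝓝[>] (0 : ℝ)) (𝓝 a)) := by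
  obtain ⟨c, d, hsub, han⟩ := hZan
  set lv : ℝ := ((m : ℝ) + 1) / 2 with hlvdef
  have hm1 : (2:ℝ) ≤ (m:ℝ) := by exact_mod_cast hm
  have hlv32 : (3:ℝ)/2 ≤ lv := by rw [hlvdef]; linarith
  have hlv0 : 0 < lv := by linarith
  have hlvne : lv ≠ 0 := ne_of_gt hlv0
  have hm1ne : ((m:ℝ) + 1) ≠ 0 := by linarith
  have hinv : 1 / lv = 2 / ((m : ℝ) + 1) := by
    rw [hlvdef]; field_simp
  -- differentiability of Z on Ioc 0 1
  have hZdiff : ∀ r ∈ Ioc (0:ℝ) 1, DifferentiableAt ℝ Z r := fun r hr =>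
    (han r (hsub hr)).differentiableAt
  have hZd : ∀ r ∈ Ioc (0:ℝ) 1, HasDerivAt Z (deriv Z r) r := fun r hr =>
    (hZdiff r hr).hasDerivAt
  have hZcont : ContinuousOn Z (Ioc (0:ℝ) 1) := fun r hr =>
    (hZdiff r hr).continuousAt.continuousWithinAt
  -- Z is strictly antitone on (0,1]
  have hanti : StrictAntiOn Z (Ioc (0:ℝ) 1) := by
    apply strictAntiOn_of_deriv_neg (convex_Ioc 0 1) hZcont
    intro x hx
    rw [interior_Ioc] at hx
    exact hZ' x ⟨hx.1, le_of_lt hx.2⟩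
  -- Z r ≤ lv on (0,1]
  have hZle : ∀ r ∈ Ioc (0:ℝ) 1, Z r ≤ lv := by
    intro r hr
    refine ge_of_tendsto hZlim ?_
    filter_upwards [Ioo_mem_nhdsGT_of_mem (show (0:ℝ) ∈ Ico (0:ℝ) r from ⟨le_refl _, hr.1⟩)]
      with t ht
    exact le_of_lt (hanti ⟨ht.1, le_trans (le_of_lt ht.2) hr.2⟩ hr ht.2)
  have hZlt : ∀ r ∈ Ioc (0:ℝ) 1, Z r < lv := by
    intro r hr
    have h2 : r/2 ∈ Ioc (0:ℝ) 1 := ⟨by linarith [hr.1], by linarith [hr.2, hr.1]⟩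
    exact lt_of_lt_of_le (hanti h2 hr (by linarith [hr.1])) (hZle _ h2)
  have firstGoal : ∀ r ∈ Ioc (0:ℝ) 1, (Z r - ((m : ℝ) + 1) / 2) / r ^ 2 < 0 := by
    intro r hr
    exact div_neg_of_neg_of_pos (by have := hZlt r hr; simpa using sub_neg.2 this)
      (pow_pos hr.1 2)
  refine ⟨firstGoal, ?_⟩
  -- polynomial facts
  have hPeval : ∀ y : ℝ, P.eval y = ∏ i : Fin (m-1), (y - 2 * lam i / ((m : ℝ) + 1)) := by
    intro y; rw [hP]; simp [eval_prod]
  have hPhat' : ∀ x : ℝ, x ≠ 0 →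
      Phat.eval x = ∏ i : Fin (m-1), (1 - (2 * lam i / ((m : ℝ) + 1)) * x) := by
    intro x hx
    rw [hPhat x hx, hPeval]
    rw [show (x:ℝ) ^ (m-1) = ∏ _i : Fin (m-1), x by
      simp [Finset.prod_const, Finset.card_univ]]
    rw [← Finset.prod_mul_distrib]
    apply Finset.prod_congr rfl
    intro i _
    field_simp
  have hPpos : ∀ x : ℝ, 0 < x → x ≤ lv → 0 < Phat.eval x := by
    intro x hx hxle
    rw [hPhat' x (ne_of_gt hx)]
    apply Finset.prod_pos
    intro i _
    rcases le_or_gt (lam i) 0 with h | h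
    · have hc : 2 * lam i / ((m : ℝ) + 1) ≤ 0 := by
        apply div_nonpos_of_nonpos_of_nonneg <;> nlinarith
      nlinarith
    · have hc : 0 < 2 * lam i / ((m : ℝ) + 1) := by positivity
      have h1 : (2 * lam i / ((m : ℝ) + 1)) * x ≤ (2 * lam i / ((m : ℝ) + 1)) * lv :=
        mul_le_mul_of_nonneg_left hxle (le_of_lt hc)
      have h2 : (2 * lam i / ((m : ℝ) + 1)) * lv = lam i := by
        rw [hlvdef]; field_simp
      have := hlt i
      nlinarith
  have hQlv : Qhat.eval lv = 0 := by
    rw [hQhat lv hlvne, hinv, hQval, mul_zero]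
  -- factor Qhat
  set R : Polynomial ℝ := Qhat /ₘ (X - C lv) with hRdef
  have hQR : (X - C lv) * R = Qhat := mul_divByMonic_eq_iff_isRoot.mpr hQlv
  have hfacQ : ∀ x : ℝ, Qhat.eval x = (x - lv) * R.eval x := by
    intro x; rw [← hQR]; simp
  -- R.eval lv = -2 * Phat.eval lv
  have hRlv : R.eval lv = -2 * Phat.eval lv := by
    have hd1 : deriv (fun x => Qhat.eval x) lv = R.eval lv := by
      rw [Polynomial.deriv]
      conv_lhs => rw [← hQR]
      simp [derivative_mul]
    have heq : (fun x => Qhat.eval x) =ᶠ[𝓝 lv] fun x => x ^ (m+1) * Q.eval (1/x) := by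
      filter_upwards [eventually_ne_nhds hlvne] with x hx
      exact hQhat x hx
    have hd2 : HasDerivAt (fun x : ℝ => x ^ (m+1) * Q.eval (1/x))
        (((m:ℝ)+1) * lv ^ m * Q.eval (1/lv)
          + lv ^ (m+1) * ((derivative Q).eval (1/lv) * (-(lv^2)⁻¹))) lv := by
      have h1 : HasDerivAt (fun x : ℝ => x ^ (m+1)) (((m:ℝ)+1) * lv ^ m) lv := by
        have := hasDerivAt_pow (m+1) lv
        simpa using this
      have h2 : HasDerivAt (fun x : ℝ => Q.eval (1/x))
          ((derivative Q).eval (1/lv) * (-(lv^2)⁻¹)) lv := by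
        have hinner : HasDerivAt (fun x : ℝ => 1/x) (-(lv^2)⁻¹) lv := by
          simpa [one_div] using hasDerivAt_inv hlvne
        exact (Polynomial.hasDerivAt Q (1/lv)).comp lv hinner
      exact h1.mul h2
    have hd3 : deriv (fun x => Qhat.eval x) lv
        = ((m:ℝ)+1) * lv ^ m * Q.eval (1/lv)
          + lv ^ (m+1) * ((derivative Q).eval (1/lv) * (-(lv^2)⁻¹)) := by
      rw [heq.deriv_eq]; exact hd2.deriv
    rw [hd1] at hd3
    rw [hd3, hinv, hQval, hQder, ← hinv]
    rw [hPhat lv hlvne]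
    have hpow : lv ^ (m+1) = lv ^ (m-1) * lv ^ 2 := by
      rw [← pow_add]; congr 1; omega
    rw [hpow]
    have h1lv : 1 / lv = lv⁻¹ := one_div lv
    have hmp1 : (m:ℝ) + 1 = 2 * lv := by rw [hlvdef]; ring
    rw [hmp1]
    field_simp
    ring
  -- factor R + 2*Phat
  set S : Polynomial ℝ := R + C 2 * Phat with hSdef
  have hSlv : S.eval lv = 0 := by
    simp [hSdef, hRlv]
  set T : Polynomial ℝ := S /ₘ (X - C lv) with hTdef
  have hST : (X - C lv) * T = S := mul_divByMonic_eq_iff_isRoot.mpr hSlv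
  have hReval : ∀ x : ℝ, R.eval x = -2 * Phat.eval x + (x - lv) * T.eval x := by
    intro x
    have h := congrArg (fun p => Polynomial.eval x p) hST
    simp [hSdef] at h
    linarith
  clear_value R S T
  -- bound on T / Phat on [lv/2, lv]
  have hIccne : (Icc (lv/2) lv).Nonempty := ⟨lv, by constructor <;> linarith⟩
  have hPposIcc : ∀ x ∈ Icc (lv/2) lv, 0 < Phat.eval x := by
    intro x hx
    exact hPpos x (by linarith [hx.1]) hx.2
  obtain ⟨x₀, hx₀, hKmax⟩ :=
    isCompact_Icc.exists_isMaxOn hIccne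
      (ContinuousOn.div
        (Continuous.continuousOn (Polynomial.continuous T).abs)
        (Polynomial.continuous Phat).continuousOn
        (fun x hx => ne_of_gt (hPposIcc x hx)))
  rw [isMaxOn_iff] at hKmax
  set K : ℝ := max (|T.eval x₀| / Phat.eval x₀) 1 with hKdef
  have hK1 : (1:ℝ) ≤ K := le_max_right _ _
  have hK0 : (0:ℝ) < K := lt_of_lt_of_le one_pos hK1
  have hTbound : ∀ x ∈ Icc (lv/2) lv, |T.eval x| ≤ K * Phat.eval x := by
    intro x hx
    have h1 : |T.eval x| / Phat.eval x ≤ K :=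
      le_trans (hKmax x hx) (le_max_left _ _)
    rw [div_le_iff₀ (hPposIcc x hx)] at h1
    linarith [h1]
  clear_value K
  -- choose epsilon and r₀
  set ε : ℝ := min (lv/2) (1/K) with hεdef
  have hε0 : 0 < ε := lt_min (by linarith) (by positivity)
  have hεK : ε * K ≤ 1 := by
    have : ε ≤ 1/K := min_le_right _ _
    rw [le_div_iff₀ hK0] at this; linarith
  have hεlv : ε ≤ lv/2 := min_le_left _ _
  clear_value ε
  have hev : ∀ᶠ r in 𝓝[>] (0:ℝ), r ∈ Ioc (0:ℝ) 1 ∧ |Z r - lv| < ε := by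
    have h1 : Ioc (0:ℝ) 1 ∈ 𝓝[>] (0:ℝ) :=
      Ioc_mem_nhdsGT_of_mem ⟨le_refl _, one_pos⟩
    have h2 : ∀ᶠ r in 𝓝[>] (0:ℝ), |Z r - lv| < ε := by
      have := Metric.tendsto_nhds.mp hZlim ε hε0
      filter_upwards [this] with r hr
      rwa [Real.dist_eq] at hr
    filter_upwards [h1, h2] with r hr1 hr2
    exact ⟨hr1, hr2⟩
  obtain ⟨r₀, hr₀mem, hr₀close⟩ := hev.exists
  -- facts on (0, r₀]
  have hr₀0 : 0 < r₀ := hr₀mem.1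
  have hsub01 : Ioc (0:ℝ) r₀ ⊆ Ioc (0:ℝ) 1 := Ioc_subset_Ioc_right hr₀mem.2
  have hclose : ∀ r ∈ Ioc (0:ℝ) r₀, lv - Z r < ε := by
    intro r hr
    have hZr₀ : lv - Z r₀ < ε := by
      have := abs_lt.mp hr₀close
      linarith [this.1]
    rcases eq_or_lt_of_le hr.2 with h | h
    · rw [h]; exact hZr₀
    · have : Z r₀ < Z r := hanti (hsub01 hr) hr₀mem h
      linarith
  have hw0 : ∀ r ∈ Ioc (0:ℝ) r₀, 0 < lv - Z r := by
    intro r hr; linarith [hZlt r (hsub01 hr)]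
  have hZIcc : ∀ r ∈ Ioc (0:ℝ) r₀, Z r ∈ Icc (lv/2) lv := by
    intro r hr
    constructor
    · have := hclose r hr; linarith
    · exact hZle r (hsub01 hr)
  have hpz : ∀ r ∈ Ioc (0:ℝ) r₀, 0 < Phat.eval (Z r) := fun r hr =>
    hPposIcc _ (hZIcc r hr)
  -- key derivative identity
  have hkey : ∀ r ∈ Ioc (0:ℝ) r₀,
      deriv Z r * (r * Phat.eval (Z r))
        = -((lv - Z r) * (2 * Phat.eval (Z r) + (lv - Z r) * T.eval (Z r))) := by
    intro r hr
    have hode := hODE r (hsub01 hr)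
    have h1 : Qhat.eval (Z r) = (Z r - lv) * R.eval (Z r) := hfacQ (Z r)
    have h2 : R.eval (Z r) = -2 * Phat.eval (Z r) + (Z r - lv) * T.eval (Z r) :=
      hReval (Z r)
    rw [h2] at h1
    linear_combination hode - h1
  -- Step 1: v(s) = (lv - Z s)/s is monotone on (0, r₀]
  have hvmono : MonotoneOn (fun s => (lv - Z s) / s) (Ioc (0:ℝ) r₀) := by
    apply monotoneOn_of_deriv_nonneg (convex_Ioc 0 r₀)
    · exact ContinuousOn.div (continuousOn_const.sub (hZcont.mono hsub01))
        continuousOn_id (fun x hx => ne_of_gt hx.1)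
    · rw [interior_Ioc]
      intro x hx
      have hxm : x ∈ Ioc (0:ℝ) r₀ := Ioo_subset_Ioc_self hx
      exact (HasDerivAt.div ((hasDerivAt_const x lv).sub (hZd x (hsub01 hxm)))
        (hasDerivAt_id x) (ne_of_gt hx.1)).differentiableAt.differentiableWithinAt
    · rw [interior_Ioc]
      intro x hx
      have hxm : x ∈ Ioc (0:ℝ) r₀ := Ioo_subset_Ioc_self hx
      have hd : HasDerivAt (fun s => (lv - Z s) / s)
          (((0 - deriv Z x) * x - (lv - Z x) * 1) / x ^ 2) x :=
        HasDerivAt.div ((hasDerivAt_const x lv).sub (hZd x (hsub01 hxm)))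
          (hasDerivAt_id x) (ne_of_gt hx.1)
      rw [hd.deriv]
      apply div_nonneg _ (sq_nonneg x)
      -- nonnegativity of the numerator
      have hkeyx := hkey x hxm
      have hpz' := hpz x hxm
      have hw := hw0 x hxm
      have ht1 : -(K * Phat.eval (Z x)) ≤ T.eval (Z x) := by
        have := (abs_le.mp (hTbound _ (hZIcc x hxm))).1
        linarith
      have hwK : (lv - Z x) * K ≤ 1 := by
        have h1 : (lv - Z x) * K ≤ ε * K :=
          mul_le_mul_of_nonneg_right (hclose x hxm).le hK0.le
        linarith
      have e1 : ((0 - deriv Z x) * x - (lv - Z x) * 1) * Phat.eval (Z x)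
          = (lv - Z x) * (Phat.eval (Z x) + (lv - Z x) * T.eval (Z x)) := by
        linear_combination -hkeyx
      have h2 : 0 ≤ Phat.eval (Z x) + (lv - Z x) * T.eval (Z x) := by
        have a := mul_le_mul_of_nonneg_left ht1 hw.le
        have b := mul_le_mul_of_nonneg_right hwK hpz'.le
        linarith [a, b]
      have hmul : 0 ≤ ((0 - deriv Z x) * x - (lv - Z x) * 1) * Phat.eval (Z x) := by
        rw [e1]; exact mul_nonneg hw.le h2
      exact (mul_nonneg_iff_of_pos_right hpz').mp hmul
  -- the linear bound
  set Cc : ℝ := (lv - Z r₀) / r₀ with hCcdef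
  have hC0 : 0 < Cc := div_pos (hw0 r₀ ⟨hr₀0, le_refl _⟩) hr₀0
  have hlin : ∀ r ∈ Ioc (0:ℝ) r₀, lv - Z r ≤ Cc * r := by
    intro r hr
    have h := hvmono hr ⟨hr₀0, le_refl _⟩ hr.2
    simp only at h
    rw [div_le_iff₀ hr.1] at h
    calc lv - Z r ≤ (lv - Z r₀) / r₀ * r := h
    _ = Cc * r := by rw [hCcdef]
  set M : ℝ := K * Cc with hMdef
  have hM0 : 0 < M := mul_pos hK0 hC0
  clear_value M
  -- Step 2: A (increasing) and B (decreasing)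
  set A : ℝ → ℝ := fun s => (lv - Z s) / s ^ 2 * Real.exp (M * s) with hAdef
  set B : ℝ → ℝ := fun s => (lv - Z s) / s ^ 2 * Real.exp (-(M * s)) with hBdef
  clear_value Cc
  -- derivative of the quotient part
  have hg2 : ∀ x ∈ Ioo (0:ℝ) r₀, HasDerivAt (fun s => (lv - Z s) / s ^ 2)
      (((0 - deriv Z x) * x ^ 2 - (lv - Z x) * (2 * x)) / (x ^ 2) ^ 2) x := by
    intro x hx
    have hxm : x ∈ Ioc (0:ℝ) r₀ := Ioo_subset_Ioc_self hx
    have hsq : HasDerivAt (fun s : ℝ => s ^ 2) (2 * x) x := by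
      simpa using hasDerivAt_pow 2 x
    exact HasDerivAt.div ((hasDerivAt_const x lv).sub (hZd x (hsub01 hxm))) hsq
      (pow_ne_zero 2 (ne_of_gt hx.1))
  have hexpd : ∀ (a : ℝ) (x : ℝ), HasDerivAt (fun s => Real.exp (a * s))
      (Real.exp (a * x) * a) x := by
    intro a x
    have h : HasDerivAt (fun s : ℝ => a * s) a x := by
      simpa using (hasDerivAt_id x).const_mul a
    exact h.exp
  have hAd : ∀ x ∈ Ioo (0:ℝ) r₀, HasDerivAt A
      (((0 - deriv Z x) * x ^ 2 - (lv - Z x) * (2 * x)) / (x ^ 2) ^ 2 * Real.exp (M * x)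
        + (lv - Z x) / x ^ 2 * (Real.exp (M * x) * M)) x :=
    fun x hx => (hg2 x hx).mul (hexpd M x)
  have hBd : ∀ x ∈ Ioo (0:ℝ) r₀, HasDerivAt B
      (((0 - deriv Z x) * x ^ 2 - (lv - Z x) * (2 * x)) / (x ^ 2) ^ 2 * Real.exp (-(M * x))
        + (lv - Z x) / x ^ 2 * (Real.exp (-(M * x)) * (-M))) x := by
    intro x hx
    have he : HasDerivAt (fun s => Real.exp (-(M * s))) (Real.exp (-(M * x)) * (-M)) x := by
      simpa [neg_mul] using hexpd (-M) x
    exact (hg2 x hx).mul he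
  -- the solved derivative formula for Z on the small interval
  have hz'val : ∀ x ∈ Ioc (0:ℝ) r₀, deriv Z x
      = -((lv - Z x) * (2 * Phat.eval (Z x) + (lv - Z x) * T.eval (Z x)))
        / (x * Phat.eval (Z x)) := by
    intro x hxm
    rw [eq_div_iff (by have := hpz x hxm; have := hxm.1; positivity)]
    linear_combination hkey x hxm
  -- A is monotone, B is antitone on (0, r₀]
  have hcontq : ContinuousOn (fun s => (lv - Z s) / s ^ 2) (Ioc (0:ℝ) r₀) :=
    ContinuousOn.div (continuousOn_const.sub (hZcont.mono hsub01))
      (continuous_pow 2).continuousOn (fun x hx => by have := hx.1; positivity)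
  have hAmono : MonotoneOn A (Ioc (0:ℝ) r₀) := by
    apply monotoneOn_of_deriv_nonneg (convex_Ioc 0 r₀)
    · exact hcontq.mul ((Real.continuous_exp.comp (continuous_const.mul continuous_id)).continuousOn)
    · rw [interior_Ioc]
      exact fun x hx => (hAd x hx).differentiableAt.differentiableWithinAt
    · rw [interior_Ioc]
      intro x hx
      have hxm : x ∈ Ioc (0:ℝ) r₀ := Ioo_subset_Ioc_self hx
      rw [(hAd x hx).deriv]
      have hpz' := hpz x hxm
      have hw := hw0 x hxm
      have hx0 := hx.1
      have ht1 : -(K * Phat.eval (Z x)) ≤ T.eval (Z x) := by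
        have := (abs_le.mp (hTbound _ (hZIcc x hxm))).1
        linarith
      have key2 : 0 ≤ (lv - Z x) * T.eval (Z x) + M * x * Phat.eval (Z x) := by
        have a := mul_le_mul_of_nonneg_left ht1 hw.le
        have b : K * ((lv - Z x) * Phat.eval (Z x))
            ≤ K * (Cc * x * Phat.eval (Z x)) :=
          mul_le_mul_of_nonneg_left
            (mul_le_mul_of_nonneg_right (hlin x hxm) hpz'.le) hK0.le
        rw [hMdef]
        linarith [a, b]
      have e2 : ((0 - deriv Z x) * x ^ 2 - (lv - Z x) * (2 * x)) / (x ^ 2) ^ 2 * Real.exp (M * x)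
            + (lv - Z x) / x ^ 2 * (Real.exp (M * x) * M)
          = Real.exp (M * x) * (x * ((lv - Z x)
              * ((lv - Z x) * T.eval (Z x) + M * x * Phat.eval (Z x))))
            / ((x ^ 2) ^ 2 * Phat.eval (Z x)) := by
        rw [hz'val x hxm]
        field_simp
        ring
      rw [e2]
      apply div_nonneg _ (by positivity)
      have := Real.exp_pos (M * x)
      positivity
  have hBanti : AntitoneOn B (Ioc (0:ℝ) r₀) := by
    apply antitoneOn_of_deriv_nonpos (convex_Ioc 0 r₀)
    · exact hcontq.mul ((Real.continuous_exp.comp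
        ((continuous_const.mul continuous_id).neg)).continuousOn)
    · rw [interior_Ioc]
      exact fun x hx => (hBd x hx).differentiableAt.differentiableWithinAt
    · rw [interior_Ioc]
      intro x hx
      have hxm : x ∈ Ioc (0:ℝ) r₀ := Ioo_subset_Ioc_self hx
      rw [(hBd x hx).deriv]
      have hpz' := hpz x hxm
      have hw := hw0 x hxm
      have hx0 := hx.1
      have ht1 : T.eval (Z x) ≤ K * Phat.eval (Z x) :=
        (abs_le.mp (hTbound _ (hZIcc x hxm))).2
      have key3 : (lv - Z x) * T.eval (Z x) - M * x * Phat.eval (Z x) ≤ 0 := by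
        have a := mul_le_mul_of_nonneg_left ht1 hw.le
        have b : K * ((lv - Z x) * Phat.eval (Z x))
            ≤ K * (Cc * x * Phat.eval (Z x)) :=
          mul_le_mul_of_nonneg_left
            (mul_le_mul_of_nonneg_right (hlin x hxm) hpz'.le) hK0.le
        rw [hMdef]
        linarith [a, b]
      have e3 : ((0 - deriv Z x) * x ^ 2 - (lv - Z x) * (2 * x)) / (x ^ 2) ^ 2 * Real.exp (-(M * x))
            + (lv - Z x) / x ^ 2 * (Real.exp (-(M * x)) * (-M))
          = Real.exp (-(M * x)) * (x * ((lv - Z x)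
              * ((lv - Z x) * T.eval (Z x) - M * x * Phat.eval (Z x))))
            / ((x ^ 2) ^ 2 * Phat.eval (Z x)) := by
        rw [hz'val x hxm]
        field_simp
        ring
      rw [e3]
      apply div_nonpos_of_nonpos_of_nonneg _ (by positivity)
      have he := Real.exp_pos (-(M * x))
      have hkey3' : (lv - Z x) * ((lv - Z x) * T.eval (Z x) - M * x * Phat.eval (Z x)) ≤ 0 :=
        mul_nonpos_of_nonneg_of_nonpos hw.le key3
      have hx' : 0 ≤ x * ((lv - Z x) * ((lv - Z x) * T.eval (Z x) - M * x * Phat.eval (Z x))) →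
          True := fun _ => trivial
      nlinarith [mul_nonneg hx0.le (neg_nonneg.mpr hkey3'), he,
        mul_nonneg he.le (mul_nonneg hx0.le (neg_nonneg.mpr hkey3'))]
  -- B is positive and bounded above
  have hBpos : ∀ r ∈ Ioc (0:ℝ) r₀, 0 < B r := by
    intro r hr
    have hw := hw0 r hr
    have hr0 := hr.1
    rw [hBdef]
    have := Real.exp_pos (-(M * r))
    positivity
  have hBleA : ∀ r ∈ Ioc (0:ℝ) r₀, B r ≤ A r₀ := by
    intro r hr
    have h1 : B r ≤ A r := by
      rw [hBdef, hAdef]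
      apply mul_le_mul_of_nonneg_left _ (by have := hw0 r hr; have := hr.1; positivity)
      apply Real.exp_le_exp.mpr
      nlinarith [hM0, hr.1]
    exact h1.trans (hAmono hr ⟨hr₀0, le_refl _⟩ hr.2)
  have hIoone : (Ioo (0:ℝ) r₀).Nonempty := ⟨r₀/2, by constructor <;> linarith⟩
  have hBdd : BddAbove (B '' Ioo (0:ℝ) r₀) := by
    refine ⟨A r₀, ?_⟩
    rintro y ⟨x, hx, rfl⟩
    exact hBleA x (Ioo_subset_Ioc_self hx)
  set L : ℝ := sSup (B '' Ioo (0:ℝ) r₀) with hLdef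
  have hBlim : Tendsto B (𝓝[>] (0:ℝ)) (𝓝 L) :=
    AntitoneOn.tendsto_nhdsWithin_Ioo_right hIoone
      (hBanti.mono Ioo_subset_Ioc_self) hBdd
  have hL0 : 0 < L := by
    have hmem : r₀/2 ∈ Ioo (0:ℝ) r₀ := ⟨by linarith, by linarith⟩
    have h1 : B (r₀/2) ≤ L := le_csSup hBdd ⟨r₀/2, hmem, rfl⟩
    exact lt_of_lt_of_le (hBpos _ (Ioo_subset_Ioc_self hmem)) h1
  have hexplim : Tendsto (fun r => Real.exp (M * r)) (𝓝[>] (0:ℝ)) (𝓝 1) := by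
    have h : ContinuousAt (fun r : ℝ => Real.exp (M * r)) 0 :=
      (Real.continuous_exp.comp (continuous_const.mul continuous_id)).continuousAt
    have := h.tendsto
    simp only [mul_zero, Real.exp_zero] at this
    exact this.mono_left nhdsWithin_le_nhds
  refine ⟨-(L * 1), by simpa using hL0, ?_⟩
  apply Tendsto.congr' _ ((hBlim.mul hexplim).neg)
  filter_upwards [Ioo_mem_nhdsGT_of_mem (show (0:ℝ) ∈ Ico (0:ℝ) r₀ from ⟨le_refl _, hr₀0⟩)]
    with r hr
  have hexpmul : Real.exp (-(M * r)) * Real.exp (M * r) = 1 := by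
    rw [← Real.exp_add]; simp
  have hr0 : (0:ℝ) < r := hr.1
  rw [hBdef]
  simp only
  calc -((lv - Z r) / r ^ 2 * Real.exp (-(M * r)) * Real.exp (M * r))
      = -((lv - Z r) / r ^ 2 * (Real.exp (-(M * r)) * Real.exp (M * r))) := by ring
    _ = -((lv - Z r) / r ^ 2 * 1) := by rw [hexpmul]
    _ = (Z r - lv) / r ^ 2 := by ring
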